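/- For every x, y > 0 with x ≠ y there exists t ∈ [√(xy), (x+y)/2] such that ln G⋆(x,y) = ((x-y)/2)² · ζ(2, 1+t). -/

import Mathlib

open Filter Finset

/-- Summability of the Hurwitz-zeta-type series. -/
lemma summable_hurwitz_aux (a : ℝ) (ha : 0 < a) :
    Summable (fun n : ℕ => 1 / ((n : ℝ) + a) ^ 2) := by
  have hbase : Summable (fun n : ℕ => 1 / ((n : ℝ) + 1) ^ 2) := by
    have := (summable_nat_add_iff (f := fun n : ℕ => 1 / (n : ℝ) ^ 2) 1).mpr
      (Real.summable_one_div_nat_pow.mpr one_lt_two)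
    simpa using this
  refine Summable.of_nonneg_of_le (fun n => by positivity)
    (fun n => ?_) (hbase.mul_left (((a + 1) / a) ^ 2))
  have h1 : 0 < (n : ℝ) + a := by positivity
  have h2 : 0 < (n : ℝ) + 1 := by positivity
  have key : a * ((n : ℝ) + 1) ≤ (a + 1) * ((n : ℝ) + a) := by
    nlinarith [(Nat.cast_nonneg n : (0:ℝ) ≤ n), sq_nonneg a]
  calc 1 / ((n : ℝ) + a) ^ 2 = (1 / ((n : ℝ) + a)) ^ 2 := by rw [div_pow, one_pow]
    _ ≤ ((a + 1) / (a * ((n : ℝ) + 1))) ^ 2 := by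
        apply pow_le_pow_left₀ (by positivity)
        rw [div_le_div_iff₀ h1 (by positivity), one_mul]
        exact key
    _ = ((a + 1) / a) ^ 2 * (1 / ((n : ℝ) + 1) ^ 2) := by
        rw [div_pow, div_pow, mul_pow]
        field_simp

/-- Elementary logarithmic bounds. -/
lemma log_bound_aux (A d2 : ℝ) (hA : 0 < A) (h : 0 < A ^ 2 - d2) (hd : 0 ≤ d2) :
    d2 / A ^ 2 ≤ Real.log (A ^ 2 / (A ^ 2 - d2)) ∧
      Real.log (A ^ 2 / (A ^ 2 - d2)) ≤ d2 / (A ^ 2 - d2) := by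
  have hA2 : 0 < A ^ 2 := by positivity
  constructor
  · have h1 : Real.log ((A ^ 2 - d2) / A ^ 2) ≤ (A ^ 2 - d2) / A ^ 2 - 1 :=
      Real.log_le_sub_one_of_pos (div_pos h hA2)
    have h2 : (A ^ 2 - d2) / A ^ 2 - 1 = -(d2 / A ^ 2) := by field_simp; ring
    have h3 : A ^ 2 / (A ^ 2 - d2) = ((A ^ 2 - d2) / A ^ 2)⁻¹ := by
      rw [inv_div]
    rw [h3, Real.log_inv]
    linarith [h1.trans_eq h2]
  · have h1 : Real.log (A ^ 2 / (A ^ 2 - d2)) ≤ A ^ 2 / (A ^ 2 - d2) - 1 :=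
      Real.log_le_sub_one_of_pos (div_pos hA2 h)
    have h2 : A ^ 2 / (A ^ 2 - d2) - 1 = d2 / (A ^ 2 - d2) := by field_simp; ring
    linarith [h1.trans_eq h2]

lemma hasSum_log_aux (x y : ℝ) (hx : 0 < x) (hy : 0 < y) :
    HasSum (fun j : ℕ =>
        Real.log ((1 + (x + y) / 2 + j) ^ 2 / ((1 + x + j) * (1 + y + j))))
      (Real.log (Real.Gamma (1 + x) * Real.Gamma (1 + y) /
          (Real.Gamma (1 + (x + y) / 2)) ^ 2)) := by
  set m : ℝ := (x + y) / 2 with hm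
  have hm0 : 0 < m := by rw [hm]; positivity
  have hBpos : ∀ j : ℕ, 0 < 1 + x + (j : ℝ) := fun j => by positivity
  have hCpos : ∀ j : ℕ, 0 < 1 + y + (j : ℝ) := fun j => by positivity
  have hApos : ∀ j : ℕ, 0 < 1 + m + (j : ℝ) := fun j => by
    have := hm0; positivity
  have hkey : ∀ j : ℕ, (1 + x + (j : ℝ)) * (1 + y + j) ≤ (1 + m + j) ^ 2 := by
    intro j; rw [hm]; nlinarith [sq_nonneg (x - y)]
  have hnn : ∀ j : ℕ,
      0 ≤ Real.log ((1 + m + (j : ℝ)) ^ 2 / ((1 + x + j) * (1 + y + j))) := by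
    intro j
    apply Real.log_nonneg
    rw [le_div_iff₀ (mul_pos (hBpos j) (hCpos j))]
    simpa using hkey j
  have hΓx : 0 < Real.Gamma (1 + x) := Real.Gamma_pos_of_pos (by linarith)
  have hΓy : 0 < Real.Gamma (1 + y) := Real.Gamma_pos_of_pos (by linarith)
  have hΓm : 0 < Real.Gamma (1 + m) := Real.Gamma_pos_of_pos (by linarith)
  have hL : 0 < Real.Gamma (1 + x) * Real.Gamma (1 + y) / (Real.Gamma (1 + m)) ^ 2 := by
    positivity
  rw [hasSum_iff_tendsto_nat_of_nonneg hnn]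
  -- limit of Gamma sequences
  have hR : Tendsto (fun n : ℕ =>
      Real.GammaSeq (1 + x) n * Real.GammaSeq (1 + y) n / (Real.GammaSeq (1 + m) n) ^ 2)
      atTop (nhds (Real.Gamma (1 + x) * Real.Gamma (1 + y) / (Real.Gamma (1 + m)) ^ 2)) :=
    ((Real.GammaSeq_tendsto_Gamma (1 + x)).mul
      (Real.GammaSeq_tendsto_Gamma (1 + y))).div
      (((Real.GammaSeq_tendsto_Gamma (1 + m)).pow 2)) (by positivity)
  have hlog : Tendsto (fun n : ℕ =>
      Real.log (Real.GammaSeq (1 + x) n * Real.GammaSeq (1 + y) n /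
        (Real.GammaSeq (1 + m) n) ^ 2)) atTop
      (nhds (Real.log (Real.Gamma (1 + x) * Real.Gamma (1 + y) /
        (Real.Gamma (1 + m)) ^ 2))) :=
    ((Real.continuousAt_log hL.ne').tendsto).comp hR
  -- identify partial sums with log of GammaSeq ratio, for n ≥ 1
  have heq : ∀ n : ℕ, 1 ≤ n →
      (∑ j ∈ range (n + 1),
        Real.log ((1 + m + (j : ℝ)) ^ 2 / ((1 + x + j) * (1 + y + j)))) =
      Real.log (Real.GammaSeq (1 + x) n * Real.GammaSeq (1 + y) n /
        (Real.GammaSeq (1 + m) n) ^ 2) := by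
    intro n hn
    have hn0 : (0 : ℝ) < n := by exact_mod_cast hn
    have hPx : (0:ℝ) < ∏ j ∈ range (n + 1), (1 + x + (j : ℝ)) :=
      Finset.prod_pos fun j _ => hBpos j
    have hPy : (0:ℝ) < ∏ j ∈ range (n + 1), (1 + y + (j : ℝ)) :=
      Finset.prod_pos fun j _ => hCpos j
    have hPm : (0:ℝ) < ∏ j ∈ range (n + 1), (1 + m + (j : ℝ)) :=
      Finset.prod_pos fun j _ => hApos j
    have hfac : (0:ℝ) < (n.factorial : ℝ) := by exact_mod_cast n.factorial_pos
    have hnp : (0:ℝ) < (n : ℝ) ^ (1 + m) := Real.rpow_pos_of_pos hn0 _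
    have hrpow : (n : ℝ) ^ (1 + x) * (n : ℝ) ^ (1 + y) = ((n : ℝ) ^ (1 + m)) ^ 2 := by
      rw [← Real.rpow_add hn0, ← Real.rpow_natCast ((n:ℝ) ^ (1 + m)) 2,
        ← Real.rpow_mul hn0.le]
      congr 1
      rw [hm]; push_cast; ring
    have hprod : Real.GammaSeq (1 + x) n * Real.GammaSeq (1 + y) n /
        (Real.GammaSeq (1 + m) n) ^ 2 =
        ∏ j ∈ range (n + 1), ((1 + m + (j : ℝ)) ^ 2 / ((1 + x + j) * (1 + y + j))) := by
      rw [Finset.prod_div_distrib, Finset.prod_pow, Finset.prod_mul_distrib]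
      simp only [Real.GammaSeq]
      rw [div_mul_div_comm, div_pow, mul_pow, ← hrpow]
      field_simp
    rw [hprod, Real.log_prod (fun j _ => ne_of_gt
      (div_pos (pow_pos (hApos j) 2) (mul_pos (hBpos j) (hCpos j))))]
  have htail : Tendsto (fun n : ℕ =>
      ∑ j ∈ range (n + 1),
        Real.log ((1 + m + (j : ℝ)) ^ 2 / ((1 + x + j) * (1 + y + j)))) atTop
      (nhds (Real.log (Real.Gamma (1 + x) * Real.Gamma (1 + y) /
        (Real.Gamma (1 + m)) ^ 2))) := by
    refine hlog.congr' ?_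
    filter_upwards [eventually_ge_atTop 1] with n hn
    exact (heq n hn).symm
  exact (tendsto_add_atTop_iff_nat 1).mp htail

/-- continuity of the truncated Hurwitz sum -/
lemma continuous_hurwitz_aux (g : ℝ) (hg : 0 < g) :
    Continuous (fun t : ℝ => ∑' n : ℕ, 1 / ((n : ℝ) + (1 + max t g)) ^ 2) := by
  apply continuous_tsum (u := fun n : ℕ => 1 / ((n : ℝ) + (1 + g)) ^ 2)
  · intro n
    apply Continuous.div continuous_const (by fun_prop)
    intro t
    have h1 : g ≤ max t g := le_max_right _ _
    positivity
  · exact summable_hurwitz_aux (1 + g) (by linarith)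
  · intro n t
    have h1 : g ≤ max t g := le_max_right _ _
    have h2 : (0:ℝ) < (n : ℝ) + (1 + g) := by positivity
    have h3 : (0:ℝ) < (n : ℝ) + (1 + max t g) := by positivity
    rw [Real.norm_eq_abs, abs_of_nonneg (by positivity)]
    apply one_div_le_one_div_of_le (by positivity)
    nlinarith [(Nat.cast_nonneg n : (0:ℝ) ≤ n)]

theorem exists_mean_value_param (x y : ℝ) (hx : 0 < x) (hy : 0 < y) (hxy : x ≠ y) :
    ∃ t ∈ Set.Icc (Real.sqrt (x * y)) ((x + y) / 2),
      Real.log (Real.Gamma (1 + x) * Real.Gamma (1 + y) /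
          (Real.Gamma (1 + (x + y) / 2)) ^ 2) =
        ((x - y) / 2) ^ 2 * ∑' n : ℕ, 1 / ((n : ℝ) + (1 + t)) ^ 2 := by
  set m : ℝ := (x + y) / 2 with hm
  set g : ℝ := Real.sqrt (x * y) with hgdef
  set d2 : ℝ := ((x - y) / 2) ^ 2 with hd2
  have hm0 : 0 < m := by rw [hm]; positivity
  have hg0 : 0 < g := Real.sqrt_pos.mpr (by positivity)
  have hgm : g ≤ m := by
    calc g = Real.sqrt (x * y) := hgdef
    _ ≤ Real.sqrt (m ^ 2) := Real.sqrt_le_sqrt (by rw [hm]; nlinarith [sq_nonneg (x - y)])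
    _ = m := Real.sqrt_sq hm0.le
  have hgsq : g ^ 2 = x * y := Real.sq_sqrt (by positivity)
  have hmg : m ^ 2 - d2 = g ^ 2 := by rw [hgsq, hd2, hm]; ring
  have hd2nn : 0 ≤ d2 := by rw [hd2]; positivity
  -- the series identity for the log of the Gamma ratio
  have hsum := hasSum_log_aux x y hx hy
  rw [← hm] at hsum
  set L : ℝ := Real.log (Real.Gamma (1 + x) * Real.Gamma (1 + y) /
      (Real.Gamma (1 + m)) ^ 2) with hLdef
  -- positivity facts for each term
  have hApos : ∀ j : ℕ, 0 < 1 + m + (j : ℝ) := fun j => by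
    have := hm0; positivity
  have hBC : ∀ j : ℕ, (1 + x + (j : ℝ)) * (1 + y + j) = (1 + m + j) ^ 2 - d2 := by
    intro j; rw [hm, hd2]; ring
  have hBCpos : ∀ j : ℕ, 0 < (1 + m + (j : ℝ)) ^ 2 - d2 := by
    intro j
    rw [← hBC j]
    have h1 : (0:ℝ) < 1 + x + j := by positivity
    have h2 : (0:ℝ) < 1 + y + j := by positivity
    exact mul_pos h1 h2
  -- termwise bounds
  have hterm_lb : ∀ j : ℕ, d2 * (1 / ((j : ℝ) + (1 + m)) ^ 2) ≤
      Real.log ((1 + m + (j : ℝ)) ^ 2 / ((1 + x + j) * (1 + y + j))) := by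
    intro j
    have hb := (log_bound_aux (1 + m + (j : ℝ)) d2 (hApos j) (hBCpos j) hd2nn).1
    rw [hBC j]
    have harith : d2 * (1 / ((j : ℝ) + (1 + m)) ^ 2) = d2 / (1 + m + (j : ℝ)) ^ 2 := by
      rw [mul_one_div]
      congr 2
      ring
    rw [harith]
    exact hb
  have hterm_ub : ∀ j : ℕ,
      Real.log ((1 + m + (j : ℝ)) ^ 2 / ((1 + x + j) * (1 + y + j))) ≤
      d2 * (1 / ((j : ℝ) + (1 + g)) ^ 2) := by
    intro j
    have hb := (log_bound_aux (1 + m + (j : ℝ)) d2 (hApos j) (hBCpos j) hd2nn).2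
    rw [hBC j]
    have hG0 : (0:ℝ) < (j : ℝ) + (1 + g) := by positivity
    have h3 : ((j : ℝ) + (1 + g)) ^ 2 ≤ (1 + m + (j : ℝ)) ^ 2 - d2 := by
      nlinarith [(Nat.cast_nonneg j : (0:ℝ) ≤ j), hgm, hmg]
    have h4 : d2 / ((1 + m + (j : ℝ)) ^ 2 - d2) ≤ d2 / ((j : ℝ) + (1 + g)) ^ 2 := by
      apply div_le_div_of_nonneg_left hd2nn (by positivity) h3
    calc Real.log ((1 + m + (j : ℝ)) ^ 2 / ((1 + m + (j : ℝ)) ^ 2 - d2)) ≤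
        d2 / ((1 + m + (j : ℝ)) ^ 2 - d2) := hb
    _ ≤ d2 / ((j : ℝ) + (1 + g)) ^ 2 := h4
    _ = d2 * (1 / ((j : ℝ) + (1 + g)) ^ 2) := by rw [mul_one_div]
  -- summabilities
  have hsummable_m : Summable (fun j : ℕ => d2 * (1 / ((j : ℝ) + (1 + m)) ^ 2)) :=
    (summable_hurwitz_aux (1 + m) (by linarith)).mul_left d2
  have hsummable_g : Summable (fun j : ℕ => d2 * (1 / ((j : ℝ) + (1 + g)) ^ 2)) :=
    (summable_hurwitz_aux (1 + g) (by linarith)).mul_left d2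
  -- bounds on L
  have hLlb : d2 * (∑' n : ℕ, 1 / ((n : ℝ) + (1 + m)) ^ 2) ≤ L := by
    rw [← hsum.tsum_eq, ← tsum_mul_left]
    exact Summable.tsum_le_tsum hterm_lb hsummable_m hsum.summable
  have hLub : L ≤ d2 * (∑' n : ℕ, 1 / ((n : ℝ) + (1 + g)) ^ 2) := by
    rw [← hsum.tsum_eq, ← tsum_mul_left]
    exact Summable.tsum_le_tsum hterm_ub hsum.summable hsummable_g
  -- intermediate value theorem
  set F : ℝ → ℝ := fun t => d2 * ∑' n : ℕ, 1 / ((n : ℝ) + (1 + max t g)) ^ 2 with hF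
  have hFcont : Continuous F := continuous_const.mul (continuous_hurwitz_aux g hg0)
  have hFg : F g = d2 * ∑' n : ℕ, 1 / ((n : ℝ) + (1 + g)) ^ 2 := by
    rw [hF]; simp
  have hFm : F m = d2 * ∑' n : ℕ, 1 / ((n : ℝ) + (1 + m)) ^ 2 := by
    rw [hF]; simp only [max_eq_left hgm]
  have hmem : L ∈ Set.Icc (F m) (F g) := ⟨hFm ▸ hLlb, hFg ▸ hLub⟩
  obtain ⟨t, ht, hFt⟩ := intermediate_value_Icc' hgm hFcont.continuousOn hmem
  refine ⟨t, ht, ?_⟩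
  have hmax : max t g = t := max_eq_left ht.1
  rw [← hFt, hF]
  simp only [hmax]
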